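/- arXiv:0708.0979 — 5 statements merged into one kernel-verified Lean document; each statement's English description precedes it below -/
import Mathlib

section
/- Let c, w ∈ ℝ³ with w ≠ 0, let a > 0, and define the affine curve γ(s) = c + s·w. Then for every s ∈ ℝ, the ℝ³-valued function F(s) = (⟨γ(s), w⟩ / (√(a² + ‖γ(s)‖²) · (‖w‖²·a² + ‖γ(s) × w‖²))) • (γ(s) × w) is differentiable at s with derivative F'(s) = (γ(s) × w) / (√(a² + ‖γ(s)‖²))³. (This is the explicit antiderivative for the smoothed Biot–Savart integrand on a straight line segment.) -/
noncomputable def cross3 (u v : EuclideanSpace ℝ (Fin 3)) : EuclideanSpace ℝ (Fin 3) :=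
  WithLp.toLp 2 ![u 1 * v 2 - u 2 * v 1, u 2 * v 0 - u 0 * v 2, u 0 * v 1 - u 1 * v 0]

lemma norm_sq_three (x : EuclideanSpace ℝ (Fin 3)) :
    ‖x‖ ^ 2 = x 0 ^ 2 + x 1 ^ 2 + x 2 ^ 2 := by
  rw [← real_inner_self_eq_norm_sq]
  simp only [PiLp.inner_apply, Fin.sum_univ_three, RCLike.inner_apply, conj_trivial]
  ring

lemma inner_three (x y : EuclideanSpace ℝ (Fin 3)) :
    (inner ℝ x y : ℝ) = x 0 * y 0 + x 1 * y 1 + x 2 * y 2 := by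
  simp [PiLp.inner_apply, Fin.sum_univ_three]
  ring

lemma lagrange3 (u v : EuclideanSpace ℝ (Fin 3)) :
    ‖cross3 u v‖ ^ 2 = ‖u‖ ^ 2 * ‖v‖ ^ 2 - (inner ℝ u v : ℝ) ^ 2 := by
  rw [norm_sq_three, norm_sq_three, norm_sq_three, inner_three]
  simp only [cross3, Matrix.cons_val_zero, Matrix.cons_val_one, Matrix.head_cons,
    Matrix.cons_val_two, Matrix.tail_cons]
  ring

theorem smoothed_biot_savart_antiderivative
    (c w : EuclideanSpace ℝ (Fin 3)) (hw : w ≠ 0) (a : ℝ) (ha : 0 < a)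
    (γ : ℝ → EuclideanSpace ℝ (Fin 3)) (hγ : ∀ s, γ s = c + s • w) (s : ℝ) :
    HasDerivAt
      (fun t : ℝ =>
        ((inner ℝ (γ t) w : ℝ) /
            (Real.sqrt (a ^ 2 + ‖γ t‖ ^ 2) *
              (‖w‖ ^ 2 * a ^ 2 + ‖cross3 (γ t) w‖ ^ 2))) • cross3 (γ t) w)
      ((Real.sqrt (a ^ 2 + ‖γ s‖ ^ 2) ^ 3)⁻¹ • cross3 (γ s) w) s := by
  set v := cross3 c w with hv
  have hcross : ∀ t : ℝ, cross3 (γ t) w = v := by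
    intro t
    rw [hγ]
    ext i
    fin_cases i <;>
      simp [cross3, v, PiLp.add_apply, PiLp.smul_apply, smul_eq_mul] <;> ring
  set W := ‖w‖ with hW
  set A : ℝ := inner ℝ c w with hA
  have hp : ∀ t : ℝ, (inner ℝ (γ t) w : ℝ) = A + t * W ^ 2 := by
    intro t
    rw [hγ, inner_add_left, real_inner_smul_left, real_inner_self_eq_norm_sq]
  have hn : ∀ t : ℝ, ‖γ t‖ ^ 2 = ‖c‖ ^ 2 + 2 * A * t + W ^ 2 * t ^ 2 := by
    intro t
    rw [hγ, norm_add_sq_real, real_inner_smul_right, norm_smul, Real.norm_eq_abs,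
      mul_pow, sq_abs]
    ring
  have hWpos : 0 < W := norm_pos_iff.mpr hw
  -- the constant K
  set K : ℝ := W ^ 2 * a ^ 2 + ‖v‖ ^ 2 with hKdef
  have hKpos : 0 < K := by
    rw [hKdef]
    nlinarith [sq_nonneg ‖v‖, mul_pos (pow_pos hWpos 2) (pow_pos ha 2)]
  set Q : ℝ := a ^ 2 + (‖c‖ ^ 2 + 2 * A * s + W ^ 2 * s ^ 2) with hQdef
  have hQpos : 0 < Q := by
    have := hn s
    nlinarith [sq_nonneg ‖γ s‖]
  set P : ℝ := A + s * W ^ 2 with hP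
  have hK : K = W ^ 2 * Q - P ^ 2 := by
    have h := lagrange3 (γ s) w
    rw [hcross s, hp s, hn s] at h
    rw [hKdef, h, hQdef, hP]
    ring
  have hr : Real.sqrt Q > 0 := Real.sqrt_pos.mpr hQpos
  have hr2 : Real.sqrt Q ^ 2 = Q := Real.sq_sqrt hQpos.le
  -- rewrite the function
  have hfun : (fun t : ℝ =>
        ((inner ℝ (γ t) w : ℝ) /
            (Real.sqrt (a ^ 2 + ‖γ t‖ ^ 2) *
              (‖w‖ ^ 2 * a ^ 2 + ‖cross3 (γ t) w‖ ^ 2))) • cross3 (γ t) w)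
      = (fun t : ℝ =>
        ((A + t * W ^ 2) /
            (Real.sqrt (a ^ 2 + (‖c‖ ^ 2 + 2 * A * t + W ^ 2 * t ^ 2)) * K)) • v) := by
    funext t
    rw [hcross t, hp t, hn t]
  rw [hfun, hcross s, hn s]
  -- scalar derivative
  have hQder : HasDerivAt (fun t : ℝ => a ^ 2 + (‖c‖ ^ 2 + 2 * A * t + W ^ 2 * t ^ 2))
      (2 * P) s := by
    have h1 : HasDerivAt (fun t : ℝ => 2 * A * t) (2 * A) s := by
      simpa using (hasDerivAt_id s).const_mul (2 * A)
    have h2 : HasDerivAt (fun t : ℝ => W ^ 2 * t ^ 2) (W ^ 2 * (2 * s)) s := by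
      simpa using (hasDerivAt_pow 2 s).const_mul (W ^ 2)
    have := (((h1.const_add (‖c‖ ^ 2)).add h2).const_add (a ^ 2))
    rw [show 2 * P = 2 * A + W ^ 2 * (2 * s) by rw [hP]; ring]
    exact this
  have hne : a ^ 2 + (‖c‖ ^ 2 + 2 * A * s + W ^ 2 * s ^ 2) ≠ 0 := by
    rw [← hQdef]; exact hQpos.ne'
  have hsq : HasDerivAt (fun t : ℝ =>
      Real.sqrt (a ^ 2 + (‖c‖ ^ 2 + 2 * A * t + W ^ 2 * t ^ 2)))
      (2 * P / (2 * Real.sqrt Q)) s := by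
    have := hQder.sqrt hne
    rw [← hQdef] at this
    exact this
  have hden : HasDerivAt (fun t : ℝ =>
      Real.sqrt (a ^ 2 + (‖c‖ ^ 2 + 2 * A * t + W ^ 2 * t ^ 2)) * K)
      (2 * P / (2 * Real.sqrt Q) * K) s := hsq.mul_const K
  have hnum : HasDerivAt (fun t : ℝ => A + t * W ^ 2) (W ^ 2) s := by
    simpa using ((hasDerivAt_id s).mul_const (W ^ 2)).const_add A
  have hdne : Real.sqrt (a ^ 2 + (‖c‖ ^ 2 + 2 * A * s + W ^ 2 * s ^ 2)) * K ≠ 0 := by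
    rw [← hQdef]
    exact mul_ne_zero hr.ne' hKpos.ne'
  have hf := hnum.div hden hdne
  rw [← hQdef] at hf
  have hval : (W ^ 2 * (Real.sqrt Q * K) - (A + s * W ^ 2) * (2 * P / (2 * Real.sqrt Q) * K)) /
      (Real.sqrt Q * K) ^ 2 = (Real.sqrt Q ^ 3)⁻¹ := by
    rw [← hP]
    have hK' : K = W ^ 2 * Real.sqrt Q ^ 2 - P ^ 2 := by rw [hr2]; exact hK
    field_simp
    linear_combination hK'.symm
  rw [hval] at hf
  have := hf.smul_const v
  rw [← hQdef]
  exact this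
end

section
/- (Lax pair.) Let γ : ℤ → Im ℍ be a polygon with edge vectors S_i = γ_{i+1} − γ_i, let T : ℤ → ℍ satisfy ‖T_i‖ = 1 for all i, let S̃ : ℤ → ℍ, and let r ∈ ℝ, l > 0. For λ, ρ ∈ ℝ define the quaternionic 2×2 matrices U_i(λ,ρ) = [[λ, −ρ − S_i],[ρ + S_i, λ]], Ũ_i(λ,ρ) = [[λ, −ρ − S̃_i],[ρ + S̃_i, λ]], and V_i(λ,ρ) = [[λ, −ρ + r − l·T_i],[ρ − r + l·T_i, λ]]. Then V_{i+1}(λ,ρ) · U_i(λ,ρ) = Ũ_i(λ,ρ) · V_i(λ,ρ) holds for all i ∈ ℤ and all λ, ρ ∈ ℝ if and only if for all i ∈ ℤ both T_{i+1} · (−r + l·T_i − S_i) = (−r + l·T_i − S_i) · T_i and l·T_{i+1} + S_i = S̃_i + l·T_i. -/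
open Quaternion

/-- The matrix `[[λ, −ρ − S],[ρ + S, λ]]` appearing in the Lax pair. -/
noncomputable def laxMat (S : ℍ[ℝ]) (lam rho : ℝ) : Matrix (Fin 2) (Fin 2) ℍ[ℝ] :=
  !![(lam : ℍ[ℝ]), -(rho : ℍ[ℝ]) - S; (rho : ℍ[ℝ]) + S, (lam : ℍ[ℝ])]

private lemma expand1 (ρ : ℝ) (x y : ℍ[ℝ]) :
    (-(ρ:ℍ[ℝ]) - x) * ((ρ:ℍ[ℝ]) + y)
      = -((ρ:ℍ[ℝ]) * ρ) - (ρ:ℍ[ℝ]) * (x + y) - x * y := by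
  have hc : x * (ρ:ℍ[ℝ]) = (ρ:ℍ[ℝ]) * x := (Quaternion.coe_commutes ρ x).symm
  rw [sub_mul, neg_mul, mul_add, mul_add, hc, mul_add]
  abel

private lemma expand2 (ρ : ℝ) (x y : ℍ[ℝ]) :
    ((ρ:ℍ[ℝ]) + x) * (-(ρ:ℍ[ℝ]) - y)
      = -((ρ:ℍ[ℝ]) * ρ) - (ρ:ℍ[ℝ]) * (x + y) - x * y := by
  have hc : x * (ρ:ℍ[ℝ]) = (ρ:ℍ[ℝ]) * x := (Quaternion.coe_commutes ρ x).symm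
  rw [add_mul, mul_sub, mul_sub, mul_neg, mul_neg, hc, mul_add]
  abel

private lemma lax_mul (A C B D : ℍ[ℝ]) (h1 : A * B = C * D) (h2 : A + B = C + D)
    (lam rho : ℝ) :
    laxMat A lam rho * laxMat B lam rho = laxMat C lam rho * laxMat D lam rho := by
  have hcA : (-(rho:ℍ[ℝ]) - A) * (lam:ℍ[ℝ]) = (lam:ℍ[ℝ]) * (-(rho:ℍ[ℝ]) - A) :=
    (Quaternion.coe_commutes lam _).symm
  have hcC : (-(rho:ℍ[ℝ]) - C) * (lam:ℍ[ℝ]) = (lam:ℍ[ℝ]) * (-(rho:ℍ[ℝ]) - C) :=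
    (Quaternion.coe_commutes lam _).symm
  have hcA' : ((rho:ℍ[ℝ]) + A) * (lam:ℍ[ℝ]) = (lam:ℍ[ℝ]) * ((rho:ℍ[ℝ]) + A) :=
    (Quaternion.coe_commutes lam _).symm
  have hcC' : ((rho:ℍ[ℝ]) + C) * (lam:ℍ[ℝ]) = (lam:ℍ[ℝ]) * ((rho:ℍ[ℝ]) + C) :=
    (Quaternion.coe_commutes lam _).symm
  refine Matrix.ext fun i j => ?_
  fin_cases i <;> fin_cases j <;>
    simp only [laxMat, Matrix.mul_fin_two, Matrix.of_apply, Matrix.cons_val_zero,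
      Matrix.cons_val_one, Matrix.head_cons, Matrix.head_fin_const, Matrix.cons_val',
      Matrix.empty_val', Matrix.cons_val_fin_one, Fin.zero_eta, Fin.mk_one]
  · rw [expand1, expand1, h1, h2]
  · have e : -(rho:ℍ[ℝ]) - B + (-(rho:ℍ[ℝ]) - A) = -(rho:ℍ[ℝ]) - D + (-(rho:ℍ[ℝ]) - C) := by
      calc -(rho:ℍ[ℝ]) - B + (-(rho:ℍ[ℝ]) - A)
          = -(rho:ℍ[ℝ]) + -(rho:ℍ[ℝ]) - (A + B) := by abel
      _ = -(rho:ℍ[ℝ]) + -(rho:ℍ[ℝ]) - (C + D) := by rw [h2]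
      _ = -(rho:ℍ[ℝ]) - D + (-(rho:ℍ[ℝ]) - C) := by abel
    rw [hcA, hcC, ← mul_add, ← mul_add, e]
  · have e : (rho:ℍ[ℝ]) + A + ((rho:ℍ[ℝ]) + B) = (rho:ℍ[ℝ]) + C + ((rho:ℍ[ℝ]) + D) := by
      calc (rho:ℍ[ℝ]) + A + ((rho:ℍ[ℝ]) + B) = (rho:ℍ[ℝ]) + (rho:ℍ[ℝ]) + (A + B) := by abel
      _ = (rho:ℍ[ℝ]) + (rho:ℍ[ℝ]) + (C + D) := by rw [h2]
      _ = (rho:ℍ[ℝ]) + C + ((rho:ℍ[ℝ]) + D) := by abel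
    rw [hcA', hcC', ← mul_add, ← mul_add, e]
  · rw [expand2, expand2, h1, h2]

theorem lax_pair_characterizes_darboux
    (γ : ℤ → ℍ[ℝ]) (hγ : ∀ i, (γ i).re = 0)
    (S : ℤ → ℍ[ℝ]) (hS : ∀ i, S i = γ (i + 1) - γ i)
    (T : ℤ → ℍ[ℝ]) (hT : ∀ i, ‖T i‖ = 1)
    (Stilde : ℤ → ℍ[ℝ]) (r : ℝ) (l : ℝ) (hl : 0 < l) :
    (∀ (i : ℤ) (lam rho : ℝ),
        laxMat (-(r : ℍ[ℝ]) + l • T (i + 1)) lam rho * laxMat (S i) lam rho =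
          laxMat (Stilde i) lam rho * laxMat (-(r : ℍ[ℝ]) + l • T i) lam rho) ↔
      (∀ i : ℤ,
        T (i + 1) * (-(r : ℍ[ℝ]) + l • T i - S i) =
            (-(r : ℍ[ℝ]) + l • T i - S i) * T i ∧
          l • T (i + 1) + S i = Stilde i + l • T i) := by
  have hrX : ∀ x : ℍ[ℝ], (r:ℍ[ℝ]) * x = x * (r:ℍ[ℝ]) := fun x => Quaternion.coe_commutes r x
  constructor
  · intro H i
    have e1 : (-(r:ℍ[ℝ]) + l • T (i + 1)) * S i = Stilde i * (-(r:ℍ[ℝ]) + l • T i) := by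
      have h := congrFun (congrFun (H i 0 0) 0) 0
      simp only [laxMat, Matrix.mul_fin_two, Matrix.cons_val', Matrix.cons_val_zero,
        Matrix.empty_val', Matrix.cons_val_fin_one, Matrix.cons_val_one, Matrix.head_cons,
        Matrix.head_fin_const, Matrix.of_apply] at h
      push_cast at h
      simp only [zero_mul, mul_zero, zero_add, add_zero, neg_zero, zero_sub, neg_mul,
        neg_inj] at h
      exact h
    have e2 : (-(r:ℍ[ℝ]) + l • T (i + 1)) + S i = Stilde i + (-(r:ℍ[ℝ]) + l • T i) := by
      have h := congrFun (congrFun (H i 1 0) 1) 0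
      simp only [laxMat, Matrix.mul_fin_two, Matrix.cons_val', Matrix.cons_val_zero,
        Matrix.empty_val', Matrix.cons_val_fin_one, Matrix.cons_val_one, Matrix.head_cons,
        Matrix.head_fin_const, Matrix.of_apply] at h
      push_cast at h
      simp only [zero_add, mul_one, one_mul] at h
      exact h
    set A := -(r:ℍ[ℝ]) + l • T (i + 1) with hA
    set D := -(r:ℍ[ℝ]) + l • T i with hD
    constructor
    · have hBD : S i - D = -(-(r:ℍ[ℝ]) + l • T i - S i) := by rw [hD]; abel
      have key : A * (S i - D) = (S i - D) * D := by
        have hCD : Stilde i - A = S i - D := by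
          calc Stilde i - A = Stilde i + D - (A + D) := by abel
          _ = A + S i - (A + D) := by rw [← e2]
          _ = S i - D := by abel
        calc A * (S i - D) = A * S i - A * D := by rw [mul_sub]
        _ = Stilde i * D - A * D := by rw [e1]
        _ = (Stilde i - A) * D := by rw [sub_mul]
        _ = (S i - D) * D := by rw [hCD]
      rw [hBD] at key
      have key2 : A * (-(r:ℍ[ℝ]) + l • T i - S i)
          = (-(r:ℍ[ℝ]) + l • T i - S i) * D := by
        rw [mul_neg, neg_mul] at key
        exact neg_injective key
      rw [hA, hD] at key2
      rw [add_mul, mul_add, neg_mul, mul_neg, hrX, smul_mul_assoc, mul_smul_comm] at key2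
      have hsm : l • (T (i+1) * (-(r:ℍ[ℝ]) + l • T i - S i))
          = l • ((-(r:ℍ[ℝ]) + l • T i - S i) * T i) := add_left_cancel key2
      exact smul_right_injective _ (ne_of_gt hl) hsm
    · calc l • T (i+1) + S i = (r:ℍ[ℝ]) + (A + S i) := by rw [hA]; abel
      _ = (r:ℍ[ℝ]) + (Stilde i + D) := by rw [e2]
      _ = Stilde i + l • T i := by rw [hD]; abel
  · intro H i lam rho
    obtain ⟨h1, h2⟩ := H i
    apply lax_mul
    · have key2 : (-(r:ℍ[ℝ]) + l • T (i+1)) * (-(r:ℍ[ℝ]) + l • T i - S i)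
          = (-(r:ℍ[ℝ]) + l • T i - S i) * (-(r:ℍ[ℝ]) + l • T i) := by
        rw [add_mul, mul_add, neg_mul, mul_neg, hrX, smul_mul_assoc, mul_smul_comm, h1]
      set A := -(r:ℍ[ℝ]) + l • T (i+1) with hA
      set D := -(r:ℍ[ℝ]) + l • T i with hD
      have hX : D - S i = -(r:ℍ[ℝ]) + l • T i - S i := by rw [hD]
      rw [← hX] at key2
      have hBB : S i = D - (D - S i) := by abel
      have hCC : A - (D - S i) = Stilde i := by
        have hs : Stilde i = l • T (i+1) + S i - l • T i :=
          eq_sub_of_add_eq h2.symm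
        rw [hs, hA, hD]; abel
      calc A * S i = A * (D - (D - S i)) := by conv_lhs => rw [hBB]
      _ = A * D - A * (D - S i) := by rw [mul_sub]
      _ = A * D - (D - S i) * D := by rw [key2]
      _ = (A - (D - S i)) * D := by rw [← sub_mul]
      _ = Stilde i * D := by rw [hCC]
    · calc -(r:ℍ[ℝ]) + l • T (i+1) + S i = -(r:ℍ[ℝ]) + (l • T (i+1) + S i) := by abel
      _ = -(r:ℍ[ℝ]) + (Stilde i + l • T i) := by rw [h2]
      _ = Stilde i + (-(r:ℍ[ℝ]) + l • T i) := by abel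
end

section
/- (Permutability.) Let γ : ℤ → Im ℍ be a polygon with edge vectors S_i = γ_{i+1} − γ_i, let r, ρ ∈ ℝ, l, λ > 0, and let T, T̂ : ℤ → Im ℍ be sequences of purely imaginary unit quaternions such that T_{i+1}·(−r + l·T_i − S_i) = (−r + l·T_i − S_i)·T_i and T̂_{i+1}·(−ρ + λ·T̂_i − S_i) = (−ρ + λ·T̂_i − S_i)·T̂_i for all i (i.e. η = γ + l·T is a Darboux transform of γ with twist parameter r and distance l, and η̂ = γ + λ·T̂ is a Darboux transform of γ with twist parameter ρ and distance λ). Assume (ρ − r + l·T_i)·T̂_i + λ ≠ 0 for all i, and define T̃_i = (λ·T̂_i − ρ + r − l·T_i) · ((ρ − r + l·T_i)·T̂_i + λ)⁻¹. Then for all i: T̃_i is purely imaginary with ‖T̃_i‖ = 1, and T̃_{i+1}·(−ρ + λ·T̃_i − S̃_i) = (−ρ + λ·T̃_i − S̃_i)·T̃_i, where S̃_i = η_{i+1} − η_i; that is, η + λ·T̃ is a Darboux transform of η with twist parameter ρ and distance λ. -/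
open Quaternion

private lemma re_mul_comm' (p q : ℍ[ℝ]) : (p * q).re = (q * p).re := by
  simp [Quaternion.re_mul]; ring

private lemma im_unit_sq {q : ℍ[ℝ]} (h0 : q.re = 0) (h1 : ‖q‖ = 1) : q * q = -1 := by
  have hs : star q = -q := by ext <;> simp [h0]
  have h2 : q * star q = ((normSq q : ℝ) : ℍ[ℝ]) := Quaternion.mul_star_eq_coe q
  rw [hs, mul_neg] at h2
  have h3 : normSq q = 1 := by
    have := Quaternion.normSq_eq_norm_mul_self (a := q)
    rw [this, h1]; norm_num
  rw [h3] at h2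
  simpa using congrArg Neg.neg h2

set_option maxHeartbeats 2000000 in
private lemma darboux_main_identity (t t' u u' s : ℍ[ℝ]) (r rho l lam : ℝ) :
    (-(rho:ℍ[ℝ]) - (s + l•t' - l•t)) * (((rho:ℍ[ℝ]) - r + l•t)*u + lam)
        + lam•((((rho:ℍ[ℝ]) - r + l•t)*u + lam)*u)
      - (((rho:ℍ[ℝ]) - r + l•t')*u' + lam)*(-(rho:ℍ[ℝ]) + lam•u - s)
    = -(l•((t'*(-(r:ℍ[ℝ]) + l•t - s) - (-(r:ℍ[ℝ]) + l•t - s)*t)*u))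
      - ((rho:ℍ[ℝ]) - r + l•t')*(u'*(-(rho:ℍ[ℝ]) + lam•u - s) - (-(rho:ℍ[ℝ]) + lam•u - s)*u)
      + (lam*l)•((t - t')*(u*u + 1)) := by
  ext <;>
    simp [Quaternion.re_mul, Quaternion.imI_mul, Quaternion.imJ_mul, Quaternion.imK_mul] <;>
    ring

private lemma conj_intertwine {d d' u u' B : ℍ[ℝ]} (hd : d ≠ 0) (hd' : d' ≠ 0)
    (h : u' * B = B * u) :
    (d' * u' * d'⁻¹) * (d' * B * d⁻¹) = (d' * B * d⁻¹) * (d * u * d⁻¹) := by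
  calc (d' * u' * d'⁻¹) * (d' * B * d⁻¹)
      = d' * u' * (d'⁻¹ * d') * (B * d⁻¹) := by noncomm_ring
    _ = d' * (u' * B) * d⁻¹ := by rw [inv_mul_cancel₀ hd', mul_one]; noncomm_ring
    _ = d' * (B * u) * d⁻¹ := by rw [h]
    _ = d' * B * (d⁻¹ * d) * (u * d⁻¹) := by rw [inv_mul_cancel₀ hd, mul_one]; noncomm_ring
    _ = (d' * B * d⁻¹) * (d * u * d⁻¹) := by noncomm_ring

private lemma smul_dist (P St d X : ℍ[ℝ]) (lam : ℝ) :
    (-P + lam • X - St) * d = (-P - St) * d + lam • (X * d) := by noncomm_ring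

theorem darboux_permutability
    (γ : ℤ → ℍ[ℝ]) (hγ : ∀ i, (γ i).re = 0)
    (S : ℤ → ℍ[ℝ]) (hS : ∀ i, S i = γ (i + 1) - γ i)
    (r rho : ℝ) (l lam : ℝ) (hl : 0 < l) (hlam : 0 < lam)
    (T That : ℤ → ℍ[ℝ])
    (hTim : ∀ i, (T i).re = 0) (hTnorm : ∀ i, ‖T i‖ = 1)
    (hThatim : ∀ i, (That i).re = 0) (hThatnorm : ∀ i, ‖That i‖ = 1)
    (hTdarboux : ∀ i,
      T (i + 1) * (-(r : ℍ[ℝ]) + l • T i - S i) =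
        (-(r : ℍ[ℝ]) + l • T i - S i) * T i)
    (hThatdarboux : ∀ i,
      That (i + 1) * (-(rho : ℍ[ℝ]) + lam • That i - S i) =
        (-(rho : ℍ[ℝ]) + lam • That i - S i) * That i)
    (hden : ∀ i, ((rho : ℍ[ℝ]) - (r : ℍ[ℝ]) + l • T i) * That i + (lam : ℍ[ℝ]) ≠ 0)
    (Ttilde : ℤ → ℍ[ℝ])
    (hTtilde : ∀ i,
      Ttilde i =
        (lam • That i - (rho : ℍ[ℝ]) + (r : ℍ[ℝ]) - l • T i) *
          (((rho : ℍ[ℝ]) - (r : ℍ[ℝ]) + l • T i) * That i + (lam : ℍ[ℝ]))⁻¹)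
    (η : ℤ → ℍ[ℝ]) (hη : ∀ i, η i = γ i + l • T i)
    (Stilde : ℤ → ℍ[ℝ]) (hStilde : ∀ i, Stilde i = η (i + 1) - η i) :
    ∀ i : ℤ,
      (Ttilde i).re = 0 ∧ ‖Ttilde i‖ = 1 ∧
        Ttilde (i + 1) * (-(rho : ℍ[ℝ]) + lam • Ttilde i - Stilde i) =
          (-(rho : ℍ[ℝ]) + lam • Ttilde i - Stilde i) * Ttilde i := by
  -- squares of the unit imaginary quaternions
  have hu2 : ∀ j : ℤ, That j * That j = -1 := fun j =>
    im_unit_sq (hThatim j) (hThatnorm j)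
  -- Ttilde is conjugation of That by the denominator
  have hTt : ∀ j : ℤ,
      Ttilde j = (((rho:ℍ[ℝ]) - r + l • T j) * That j + lam) * That j *
        (((rho:ℍ[ℝ]) - r + l • T j) * That j + lam)⁻¹ := by
    intro j
    have hnum : lam • That j - (rho:ℍ[ℝ]) + r - l • T j
        = (((rho:ℍ[ℝ]) - r + l • T j) * That j + lam) * That j := by
      have h : (((rho:ℍ[ℝ]) - r + l • T j) * That j + (lam:ℍ[ℝ])) * That j
          = ((rho:ℍ[ℝ]) - r + l • T j) * (That j * That j) + (lam:ℍ[ℝ]) * That j := by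
        noncomm_ring
      rw [h, hu2 j]
      ext <;> simp <;> ring
    rw [hTtilde j, hnum]
  intro i
  have hd : (((rho:ℍ[ℝ]) - r + l • T i) * That i + (lam:ℍ[ℝ])) ≠ 0 := hden i
  have hd' : (((rho:ℍ[ℝ]) - r + l • T (i+1)) * That (i+1) + (lam:ℍ[ℝ])) ≠ 0 := hden (i+1)
  refine ⟨?_, ?_, ?_⟩
  · -- real part zero
    rw [hTt i, re_mul_comm', ← mul_assoc, inv_mul_cancel₀ hd, one_mul]
    exact hThatim i
  · -- norm one
    rw [hTt i, norm_mul, norm_mul, norm_inv, hThatnorm i, mul_one,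
      mul_inv_cancel₀ (norm_ne_zero_iff.mpr hd)]
  · -- Darboux equation
    have hSt : Stilde i = S i + l • T (i+1) - l • T i := by
      rw [hStilde, hη, hη, hS]; abel
    -- the key identity:  Btilde * d = d' * Bhat
    have key : (-(rho:ℍ[ℝ]) + lam • Ttilde i - Stilde i) *
          (((rho:ℍ[ℝ]) - r + l • T i) * That i + lam)
        = (((rho:ℍ[ℝ]) - r + l • T (i+1)) * That (i+1) + lam) *
          (-(rho:ℍ[ℝ]) + lam • That i - S i) := by
      have hmain := darboux_main_identity (T i) (T (i+1)) (That i) (That (i+1)) (S i)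
        r rho l lam
      rw [hTdarboux i, hThatdarboux i, hu2 i] at hmain
      simp only [sub_self, zero_mul, mul_zero, smul_zero, neg_add_cancel, neg_zero,
        sub_zero, add_zero, zero_add] at hmain
      have key2 := sub_eq_zero.mp hmain
      -- rewrite Btilde * d into the left side of key2
      rw [hSt, hTt i, smul_dist]
      have h4 : ((↑rho - ↑r + l • T i) * That i + ↑lam) * That i *
            ((↑rho - ↑r + l • T i) * That i + ↑lam)⁻¹ *
            ((↑rho - ↑r + l • T i) * That i + ↑lam)
          = ((↑rho - ↑r + l • T i) * That i + ↑lam) * That i := by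
        rw [mul_assoc, inv_mul_cancel₀ hd, mul_one]
      rw [h4]
      exact key2
    -- express Btilde as a conjugate
    have hBt : (-(rho:ℍ[ℝ]) + lam • Ttilde i - Stilde i)
        = (((rho:ℍ[ℝ]) - r + l • T (i+1)) * That (i+1) + lam) *
            (-(rho:ℍ[ℝ]) + lam • That i - S i) *
            (((rho:ℍ[ℝ]) - r + l • T i) * That i + lam)⁻¹ :=
      (eq_mul_inv_iff_mul_eq₀ hd).mpr key
    rw [hBt, hTt i, hTt (i+1)]
    exact conj_intertwine hd hd' (hThatdarboux i)
end

section
/- (Conjugation of the monodromy.) Let n ≥ 1, let γ : ℤ → Im ℍ be a closed polygon of period n (γ_{i+n} = γ_i for all i) with edge vectors S_i = γ_{i+1} − γ_i, let r ∈ ℝ, l > 0, and let T : ℤ → Im ℍ be n-periodic with ‖T_i‖ = 1 satisfying T_{i+1}·(−r + l·T_i − S_i) = (−r + l·T_i − S_i)·T_i for all i, so that η = γ + l·T is a closed Darboux transform of γ with edge vectors S̃_i = η_{i+1} − η_i. For λ, ρ ∈ ℝ define U_i(λ,ρ) = [[λ, −ρ − S_i],[ρ + S_i, λ]], Ũ_i(λ,ρ)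 = [[λ, −ρ − S̃_i],[ρ + S̃_i, λ]], V_i(λ,ρ) = [[λ, −ρ + r − l·T_i],[ρ − r + l·T_i, λ]], and the monodromy matrices H_{λ,ρ} = U_{n−1}(λ,ρ)⋯U_1(λ,ρ)·U_0(λ,ρ) and H^η_{λ,ρ} = Ũ_{n−1}(λ,ρ)⋯Ũ_1(λ,ρ)·Ũ_0(λ,ρ). Then for all λ, ρ ∈ ℝ: H^η_{λ,ρ} · V_0(λ,ρ) = V_0(λ,ρ) · H_{λ,ρ}. -/
open Quaternion

lemma lax_conj (St S A B : ℍ[ℝ]) (lam rho : ℝ)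
    (hsum : St + A = S + B) (hprod : St * A = B * S) :
    laxMat St lam rho * laxMat A lam rho = laxMat B lam rho * laxMat S lam rho := by
  have crho : ∀ x : ℍ[ℝ], (rho : ℍ[ℝ]) * x = x * (rho : ℍ[ℝ]) := fun x =>
    Quaternion.coe_commutes rho x
  have clam : ∀ x : ℍ[ℝ], (lam : ℍ[ℝ]) * x = x * (lam : ℍ[ℝ]) := fun x =>
    Quaternion.coe_commutes lam x
  have hmain : ((rho:ℍ[ℝ]) + St) * ((rho:ℍ[ℝ]) + A) = ((rho:ℍ[ℝ]) + B) * ((rho:ℍ[ℝ]) + S) := by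
    have L : ((rho:ℍ[ℝ]) + St) * ((rho:ℍ[ℝ]) + A)
        = (rho:ℍ[ℝ]) * (rho:ℍ[ℝ]) + (rho:ℍ[ℝ]) * St + (rho:ℍ[ℝ]) * A + St * A := by
      rw [crho St]; noncomm_ring
    have R : ((rho:ℍ[ℝ]) + B) * ((rho:ℍ[ℝ]) + S)
        = (rho:ℍ[ℝ]) * (rho:ℍ[ℝ]) + (rho:ℍ[ℝ]) * B + (rho:ℍ[ℝ]) * S + B * S := by
      rw [crho B]; noncomm_ring
    rw [L, R, hprod]
    have h2 : (rho:ℍ[ℝ]) * St + (rho:ℍ[ℝ]) * A = (rho:ℍ[ℝ]) * B + (rho:ℍ[ℝ]) * S := by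
      rw [← mul_add, ← mul_add, hsum, add_comm B S]
    calc (rho:ℍ[ℝ]) * (rho:ℍ[ℝ]) + (rho:ℍ[ℝ]) * St + (rho:ℍ[ℝ]) * A + B * S
        = (rho:ℍ[ℝ]) * (rho:ℍ[ℝ]) + ((rho:ℍ[ℝ]) * St + (rho:ℍ[ℝ]) * A) + B * S := by abel
      _ = (rho:ℍ[ℝ]) * (rho:ℍ[ℝ]) + ((rho:ℍ[ℝ]) * B + (rho:ℍ[ℝ]) * S) + B * S := by rw [h2]
      _ = (rho:ℍ[ℝ]) * (rho:ℍ[ℝ]) + (rho:ℍ[ℝ]) * B + (rho:ℍ[ℝ]) * S + B * S := by abel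
  have hsum' : (rho:ℍ[ℝ]) + St + ((rho:ℍ[ℝ]) + A) = (rho:ℍ[ℝ]) + B + ((rho:ℍ[ℝ]) + S) := by
    calc (rho:ℍ[ℝ]) + St + ((rho:ℍ[ℝ]) + A) = (rho:ℍ[ℝ]) + (rho:ℍ[ℝ]) + (St + A) := by abel
      _ = (rho:ℍ[ℝ]) + (rho:ℍ[ℝ]) + (S + B) := by rw [hsum]
      _ = (rho:ℍ[ℝ]) + B + ((rho:ℍ[ℝ]) + S) := by abel
  refine Matrix.ext fun i j => ?_
  fin_cases i <;> fin_cases j <;>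
    simp only [laxMat, Matrix.mul_apply, Fin.sum_univ_two, Matrix.cons_val', Matrix.cons_val_zero,
      Matrix.cons_val_one, Matrix.head_cons, Matrix.empty_val', Matrix.cons_val_fin_one,
      Matrix.head_fin_const, Matrix.of_apply]
  · -- (0,0)
    have : -((rho:ℍ[ℝ]) + St) * ((rho:ℍ[ℝ]) + A) = -((rho:ℍ[ℝ]) + B) * ((rho:ℍ[ℝ]) + S) := by
      rw [neg_mul, neg_mul, hmain]
    calc (lam:ℍ[ℝ]) * (lam:ℍ[ℝ]) + (-(rho:ℍ[ℝ]) - St) * ((rho:ℍ[ℝ]) + A)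
        = (lam:ℍ[ℝ]) * (lam:ℍ[ℝ]) + -(((rho:ℍ[ℝ]) + St) * ((rho:ℍ[ℝ]) + A)) := by noncomm_ring
      _ = (lam:ℍ[ℝ]) * (lam:ℍ[ℝ]) + -(((rho:ℍ[ℝ]) + B) * ((rho:ℍ[ℝ]) + S)) := by rw [hmain]
      _ = (lam:ℍ[ℝ]) * (lam:ℍ[ℝ]) + (-(rho:ℍ[ℝ]) - B) * ((rho:ℍ[ℝ]) + S) := by noncomm_ring
  · -- (0,1)
    calc (lam:ℍ[ℝ]) * (-(rho:ℍ[ℝ]) - A) + (-(rho:ℍ[ℝ]) - St) * (lam:ℍ[ℝ])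
        = (lam:ℍ[ℝ]) * (-(rho:ℍ[ℝ]) - A) + (lam:ℍ[ℝ]) * (-(rho:ℍ[ℝ]) - St) := by
          rw [clam (-(rho:ℍ[ℝ]) - St)]
      _ = (lam:ℍ[ℝ]) * (-((rho:ℍ[ℝ]) + A + ((rho:ℍ[ℝ]) + St))) := by noncomm_ring
      _ = (lam:ℍ[ℝ]) * (-((rho:ℍ[ℝ]) + S + ((rho:ℍ[ℝ]) + B))) := by
          rw [show (rho:ℍ[ℝ]) + A + ((rho:ℍ[ℝ]) + St) = (rho:ℍ[ℝ]) + S + ((rho:ℍ[ℝ]) + B) from by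
            calc (rho:ℍ[ℝ]) + A + ((rho:ℍ[ℝ]) + St) = (rho:ℍ[ℝ]) + St + ((rho:ℍ[ℝ]) + A) := by abel
              _ = (rho:ℍ[ℝ]) + B + ((rho:ℍ[ℝ]) + S) := hsum'
              _ = (rho:ℍ[ℝ]) + S + ((rho:ℍ[ℝ]) + B) := by abel]
      _ = (lam:ℍ[ℝ]) * (-(rho:ℍ[ℝ]) - S) + (lam:ℍ[ℝ]) * (-(rho:ℍ[ℝ]) - B) := by noncomm_ring
      _ = (lam:ℍ[ℝ]) * (-(rho:ℍ[ℝ]) - S) + (-(rho:ℍ[ℝ]) - B) * (lam:ℍ[ℝ]) := by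
          rw [clam (-(rho:ℍ[ℝ]) - B)]
  · -- (1,0)
    calc ((rho:ℍ[ℝ]) + St) * (lam:ℍ[ℝ]) + (lam:ℍ[ℝ]) * ((rho:ℍ[ℝ]) + A)
        = (lam:ℍ[ℝ]) * ((rho:ℍ[ℝ]) + St + ((rho:ℍ[ℝ]) + A)) := by
          rw [← clam ((rho:ℍ[ℝ]) + St)]; noncomm_ring
      _ = (lam:ℍ[ℝ]) * ((rho:ℍ[ℝ]) + B + ((rho:ℍ[ℝ]) + S)) := by rw [hsum']
      _ = ((rho:ℍ[ℝ]) + B) * (lam:ℍ[ℝ]) + (lam:ℍ[ℝ]) * ((rho:ℍ[ℝ]) + S) := by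
          rw [← clam ((rho:ℍ[ℝ]) + B)]; noncomm_ring
  · -- (1,1)
    calc ((rho:ℍ[ℝ]) + St) * (-(rho:ℍ[ℝ]) - A) + (lam:ℍ[ℝ]) * (lam:ℍ[ℝ])
        = -(((rho:ℍ[ℝ]) + St) * ((rho:ℍ[ℝ]) + A)) + (lam:ℍ[ℝ]) * (lam:ℍ[ℝ]) := by noncomm_ring
      _ = -(((rho:ℍ[ℝ]) + B) * ((rho:ℍ[ℝ]) + S)) + (lam:ℍ[ℝ]) * (lam:ℍ[ℝ]) := by rw [hmain]
      _ = ((rho:ℍ[ℝ]) + B) * (-(rho:ℍ[ℝ]) - S) + (lam:ℍ[ℝ]) * (lam:ℍ[ℝ]) := by noncomm_ring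

/-- The ordered product `A_{k−1} ⋯ A_1 · A_0` of a sequence of matrices. -/
noncomputable def ordProd (A : ℕ → Matrix (Fin 2) (Fin 2) ℍ[ℝ]) :
    ℕ → Matrix (Fin 2) (Fin 2) ℍ[ℝ]
  | 0 => 1
  | k + 1 => A k * ordProd A k

theorem monodromy_conjugation
    (n : ℕ) (hn : 1 ≤ n)
    (γ : ℤ → ℍ[ℝ]) (hγ : ∀ i, (γ i).re = 0)
    (hγper : ∀ i, γ (i + n) = γ i)
    (S : ℤ → ℍ[ℝ]) (hS : ∀ i, S i = γ (i + 1) - γ i)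
    (r : ℝ) (l : ℝ) (hl : 0 < l)
    (T : ℤ → ℍ[ℝ]) (hTim : ∀ i, (T i).re = 0) (hTnorm : ∀ i, ‖T i‖ = 1)
    (hTper : ∀ i, T (i + n) = T i)
    (hTdarboux : ∀ i,
      T (i + 1) * (-(r : ℍ[ℝ]) + l • T i - S i) =
        (-(r : ℍ[ℝ]) + l • T i - S i) * T i)
    (η : ℤ → ℍ[ℝ]) (hη : ∀ i, η i = γ i + l • T i)
    (Stilde : ℤ → ℍ[ℝ]) (hStilde : ∀ i, Stilde i = η (i + 1) - η i) :
    ∀ lam rho : ℝ,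
      ordProd (fun k => laxMat (Stilde (k : ℤ)) lam rho) n *
          laxMat (-(r : ℍ[ℝ]) + l • T 0) lam rho =
        laxMat (-(r : ℍ[ℝ]) + l • T 0) lam rho *
          ordProd (fun k => laxMat (S (k : ℤ)) lam rho) n := by
  intro lam rho
  have step : ∀ i : ℤ,
      laxMat (Stilde i) lam rho * laxMat (-(r : ℍ[ℝ]) + l • T i) lam rho =
        laxMat (-(r : ℍ[ℝ]) + l • T (i + 1)) lam rho * laxMat (S i) lam rho := by
    intro i
    set A : ℍ[ℝ] := -(r : ℍ[ℝ]) + l • T i with hA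
    set B : ℍ[ℝ] := -(r : ℍ[ℝ]) + l • T (i + 1) with hB
    have hsum : Stilde i + A = S i + B := by
      rw [hStilde, hη, hη, hS, hA, hB]
      module
    have hd : T (i + 1) * (A - S i) = (A - S i) * T i := hTdarboux i
    have key : B * (A - S i) = (A - S i) * A := by
      rw [hA, hB, add_mul, mul_add, smul_mul_assoc, mul_smul_comm, hd,
        neg_mul, mul_neg, Quaternion.coe_commutes]
    apply lax_conj
    · exact hsum
    · have hSt : Stilde i = S i + B - A := eq_sub_of_add_eq hsum
      rw [hSt]
      have expand : (S i + B - A) * A = S i * A + (B * (A - S i) + B * S i) - A * A := by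
        noncomm_ring
      rw [expand, key]
      noncomm_ring
  have main : ∀ k : ℕ,
      ordProd (fun k => laxMat (Stilde (k : ℤ)) lam rho) k *
          laxMat (-(r : ℍ[ℝ]) + l • T 0) lam rho =
        laxMat (-(r : ℍ[ℝ]) + l • T (k : ℤ)) lam rho *
          ordProd (fun k => laxMat (S (k : ℤ)) lam rho) k := by
    intro k
    induction k with
    | zero => simp [ordProd]
    | succ k ih =>
        have hc : ((k + 1 : ℕ) : ℤ) = (k : ℤ) + 1 := by push_cast; ring
        rw [ordProd, ordProd, mul_assoc, ih, ← mul_assoc, hc, step, mul_assoc]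
  have hTn : T (n : ℤ) = T 0 := by simpa using hTper 0
  have := main n
  rwa [hTn] at this
end

section
/- If η : ℤ → Im ℍ is a Darboux transform of γ : ℤ → Im ℍ with twist parameter r ∈ ℝ and distance l > 0, then corresponding edges of γ and η have the same length: ‖η_{i+1} − η_i‖ = ‖γ_{i+1} − γ_i‖ for all i ∈ ℤ. -/
open Quaternion

theorem darboux_preserves_edge_lengths
    (γ η : ℤ → ℍ[ℝ]) (hγ : ∀ i, (γ i).re = 0) (hη : ∀ i, (η i).re = 0)
    (r : ℝ) (l : ℝ) (hl : 0 < l)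
    (S : ℤ → ℍ[ℝ]) (hS : ∀ i, S i = γ (i + 1) - γ i)
    (T : ℤ → ℍ[ℝ]) (hT : ∀ i, T i = l⁻¹ • (η i - γ i))
    (hTim : ∀ i, (T i).re = 0) (hTnorm : ∀ i, ‖T i‖ = 1)
    (hTdarboux : ∀ i,
      T (i + 1) * (-(r : ℍ[ℝ]) + l • T i - S i) =
        (-(r : ℍ[ℝ]) + l • T i - S i) * T i) :
    ∀ i : ℤ, ‖η (i + 1) - η i‖ = ‖γ (i + 1) - γ i‖ := by
  intro i
  have hl' : l ≠ 0 := ne_of_gt hl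
  have hη' : ∀ j, η j = γ j + l • T j := by
    intro j
    have h : l • T j = η j - γ j := by
      rw [hT j, smul_smul, mul_inv_cancel₀ hl', one_smul]
    rw [h]; abel
  set A : ℍ[ℝ] := -(r : ℍ[ℝ]) + l • T i - S i with hA
  have hE : η (i + 1) - η i = S i + l • T (i + 1) - l • T i := by
    rw [hη' (i + 1), hη' i, hS i]; abel
  have key : (S i + l • T (i + 1) - l • T i) * A = A * S i := by
    have D : l • (T (i + 1) * A) = l • (A * T i) := by rw [hTdarboux i]
    have expand : (S i + l • T (i + 1) - l • T i) * A
        = S i * A + l • (T (i + 1) * A) - l • (T i * A) := by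
      simp [add_mul, sub_mul, smul_mul_assoc]
    rw [expand, D, hA]
    have hr1 : (r : ℍ[ℝ]) * S i = S i * (r : ℍ[ℝ]) := ((Quaternion.coe_commute r (S i))).eq
    have hr2 : (r : ℍ[ℝ]) * T i = T i * (r : ℍ[ℝ]) := ((Quaternion.coe_commute r (T i))).eq
    simp only [add_mul, sub_mul, mul_add, mul_sub, neg_mul, mul_neg,
      smul_mul_assoc, mul_smul_comm, smul_add, smul_sub, smul_neg, smul_smul]
    rw [hr1, hr2]
    abel
  rw [hE, hS i]
  rcases eq_or_ne A 0 with h0 | h0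
  · -- degenerate case: A = 0, so S i = -r + l • T i, and r = 0 by purely-imaginary
    have hSi : S i = -(r : ℍ[ℝ]) + l • T i := by
      have := h0
      rw [hA] at this
      have : S i = -(r : ℍ[ℝ]) + l • T i - 0 := by rw [← this]; abel
      simpa using this
    have hSre : (S i).re = 0 := by
      rw [hS i]
      simp [Quaternion.re_sub, hγ]
    have hr0 : r = 0 := by
      have : (S i).re = -r + l * (T i).re := by
        rw [hSi]; simp [Quaternion.re_add, Quaternion.re_neg, Quaternion.re_smul]
      rw [hSre, hTim i] at this
      linarith
    have hSval : S i = l • T i := by rw [hSi, hr0]; simp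
    have hA0 : l • T (i + 1) = S i + l • T (i + 1) - l • T i := by
      rw [hSval]; abel
    rw [← hS i, ← hA0, hSval]
    rw [norm_smul, norm_smul, hTnorm, hTnorm]
  · -- main case: E = A * S i * A⁻¹
    have hEeq : S i + l • T (i + 1) - l • T i = A * S i * A⁻¹ :=
      (eq_mul_inv_iff_mul_eq₀ h0).mpr key
    rw [← hS i, hEeq, norm_mul, norm_mul, norm_inv]
    have hAn : ‖A‖ ≠ 0 := norm_ne_zero_iff.mpr h0
    field_simp
end
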